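/- Let N ≥ 1, M > 0, x, y ∈ ℝ^N with all components in [0, M], let 0 < δ < M, and let F : K_x → K_y satisfy |d²(p,q) − d²(F(p), F(q))| ≤ 2δ for all p, q ∈ K_x. Then for every n ∈ {1,…,N} there exists m ∈ {1,…,N} such that F(□(n)) ⊆ □(m). -/
import Mathlib


noncomputable def box (M : ℝ) (n : ℕ) : Set (ℝ × ℝ) :=
  Set.Icc (4 * M + 10 * M * (n : ℝ)) (4 * M + 10 * M * (n : ℝ) + 2 * M) ×ˢ Set.Icc (-M) M

noncomputable def pp {N : ℕ} (M : ℝ) (z : Fin N → ℝ) (n : Fin N) : ℝ × ℝ :=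
  (10 * M * ((n : ℕ) : ℝ), z n)

noncomputable def pm {N : ℕ} (M : ℝ) (z : Fin N → ℝ) (n : Fin N) : ℝ × ℝ :=
  (10 * M * ((n : ℕ) : ℝ), -(z n))

noncomputable def Kset {N : ℕ} (M : ℝ) (z : Fin N → ℝ) : Set (ℝ × ℝ) :=
  ⋃ n : Fin N, ({pp M z n, pm M z n} ∪ box M n)

theorem pp_mem {N : ℕ} (M : ℝ) (z : Fin N → ℝ) (n : Fin N) : pp M z n ∈ Kset M z :=
  Set.mem_iUnion.mpr ⟨n, Or.inl (Set.mem_insert _ _)⟩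

theorem pm_mem {N : ℕ} (M : ℝ) (z : Fin N → ℝ) (n : Fin N) : pm M z n ∈ Kset M z :=
  Set.mem_iUnion.mpr ⟨n, Or.inl (Set.mem_insert_of_mem _ rfl)⟩

theorem Kset_compact {N : ℕ} (M : ℝ) (z : Fin N → ℝ) : IsCompact (Kset M z) := by
  apply isCompact_iUnion
  intro n
  exact ((Set.toFinite _).isCompact).union (isCompact_Icc.prod isCompact_Icc)

instance {N : ℕ} (M : ℝ) (z : Fin N → ℝ) : CompactSpace ↥(Kset M z) :=
  isCompact_iff_compactSpace.mp (Kset_compact M z)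

theorem Kset_nonempty {N : ℕ} (hN : 0 < N) (M : ℝ) (z : Fin N → ℝ) : (Kset M z).Nonempty :=
  ⟨pp M z ⟨0, hN⟩, pp_mem M z ⟨0, hN⟩⟩


lemma dist_fst_le' (p q : ℝ × ℝ) : |p.1 - q.1| ≤ dist p q := by
  rw [Prod.dist_eq, ← Real.dist_eq]; exact le_max_left _ _

lemma box_mem_iff {M : ℝ} {m : ℕ} {p : ℝ × ℝ} :
    p ∈ box M m ↔ (4 * M + 10 * M * m ≤ p.1 ∧ p.1 ≤ 4 * M + 10 * M * m + 2 * M)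
      ∧ (-M ≤ p.2 ∧ p.2 ≤ M) := by
  rw [box, Set.mem_prod, Set.mem_Icc, Set.mem_Icc]

lemma box_diam {M : ℝ} {m : ℕ} {p q : ℝ × ℝ}
    (hp : p ∈ box M m) (hq : q ∈ box M m) : dist p q ≤ 2 * M := by
  rw [box_mem_iff] at hp hq
  rw [Prod.dist_eq]
  apply max_le <;> rw [Real.dist_eq, abs_sub_le_iff] <;> constructor <;> linarith [hp.1.1, hp.1.2, hp.2.1, hp.2.2, hq.1.1, hq.1.2, hq.2.1, hq.2.2]

lemma boxsep {M : ℝ} (hM : 0 ≤ M) {m m' : ℕ} (h : m ≠ m') {p q : ℝ × ℝ}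
    (hp : p ∈ box M m) (hq : q ∈ box M m') : 8 * M ≤ dist p q := by
  rw [box_mem_iff] at hp hq
  refine le_trans ?_ (dist_fst_le' p q)
  rcases lt_or_gt_of_ne h with h | h
  · have hc : (m : ℝ) + 1 ≤ m' := by exact_mod_cast h
    rw [abs_sub_comm, le_abs]
    left
    nlinarith [hp.1.2, hq.1.1, mul_nonneg hM (sub_nonneg.mpr hc)]
  · have hc : (m' : ℝ) + 1 ≤ m := by exact_mod_cast h
    rw [le_abs]
    left
    nlinarith [hp.1.1, hq.1.2, mul_nonneg hM (sub_nonneg.mpr hc)]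

lemma boxpt {M : ℝ} (hM : 0 ≤ M) {m m' : ℕ} {p q : ℝ × ℝ}
    (hp : p ∈ box M m) (hq : q.1 = 10 * M * m') : 4 * M ≤ dist p q := by
  rw [box_mem_iff] at hp
  refine le_trans ?_ (dist_fst_le' p q)
  rcases le_or_gt m' m with h | h
  · have hc : (m' : ℝ) ≤ m := by exact_mod_cast h
    rw [le_abs]; left
    nlinarith [hp.1.1, mul_nonneg hM (sub_nonneg.mpr hc)]
  · have hc : (m : ℝ) + 1 ≤ m' := by exact_mod_cast h
    rw [abs_sub_comm, le_abs]; left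
    nlinarith [hp.1.2, mul_nonneg hM (sub_nonneg.mpr hc)]

lemma ptpt {M : ℝ} (hM : 0 ≤ M) {m m' : ℕ} (h : m ≠ m') {p q : ℝ × ℝ}
    (hp : p.1 = 10 * M * m) (hq : q.1 = 10 * M * m') : 4 * M ≤ dist p q := by
  refine le_trans ?_ (dist_fst_le' p q)
  rcases lt_or_gt_of_ne h with h | h
  · have hc : (m : ℝ) + 1 ≤ m' := by exact_mod_cast h
    rw [abs_sub_comm, le_abs]; left
    nlinarith [mul_nonneg hM (sub_nonneg.mpr hc)]
  · have hc : (m' : ℝ) + 1 ≤ m := by exact_mod_cast h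
    rw [le_abs]; left
    nlinarith [mul_nonneg hM (sub_nonneg.mpr hc)]



lemma Kset_cases {N : ℕ} {M : ℝ} {y : Fin N → ℝ} {q : ℝ × ℝ} (hq : q ∈ Kset M y) :
    ∃ m : Fin N, q ∈ box M (m : ℕ) ∨ (q = pp M y m ∨ q = pm M y m) := by
  rcases Set.mem_iUnion.mp hq with ⟨m, hm⟩
  rcases hm with h | h
  · exact ⟨m, Or.inr (by simpa using h)⟩
  · exact ⟨m, Or.inl h⟩

lemma close_box {N : ℕ} {M : ℝ} (hM : 0 ≤ M) {y : Fin N → ℝ} {q r : ℝ × ℝ}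
    (hq : q ∈ Kset M y) {m : Fin N} (hr : r ∈ box M (m : ℕ))
    (hd : dist q r < 4 * M) : q ∈ box M (m : ℕ) := by
  rcases Kset_cases hq with ⟨m'', hc | hc | hc⟩
  · by_cases h : (m'' : ℕ) = (m : ℕ)
    · rwa [h] at hc
    · exact absurd hd (not_lt.mpr (le_trans (by linarith) (boxsep hM h hc hr)))
  · exact absurd hd (not_lt.mpr (by rw [dist_comm]; exact boxpt hM hr (by rw [hc]; rfl)))
  · exact absurd hd (not_lt.mpr (by rw [dist_comm]; exact boxpt hM hr (by rw [hc]; rfl)))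

lemma close_pt {N : ℕ} {M : ℝ} (hM : 0 ≤ M) {y : Fin N → ℝ} {q r : ℝ × ℝ}
    (hq : q ∈ Kset M y) {m' : Fin N} (hr : r = pp M y m' ∨ r = pm M y m')
    (hd : dist q r < 4 * M) : q = pp M y m' ∨ q = pm M y m' := by
  have hr1 : r.1 = 10 * M * ((m' : ℕ) : ℝ) := by rcases hr with h | h <;> rw [h] <;> rfl
  rcases Kset_cases hq with ⟨m'', hc | hc | hc⟩
  · exact absurd hd (not_lt.mpr (boxpt hM hc hr1))
  · by_cases h : m'' = m'
    · exact Or.inl (h ▸ hc)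
    · refine absurd hd (not_lt.mpr (ptpt hM (fun hv => h (Fin.val_injective hv)) ?_ hr1))
      rw [hc]; rfl
  · by_cases h : m'' = m'
    · exact Or.inr (h ▸ hc)
    · refine absurd hd (not_lt.mpr (ptpt hM (fun hv => h (Fin.val_injective hv)) ?_ hr1))
      rw [hc]; rfl

lemma dvert (A M : ℝ) (hM : 0 ≤ M) : dist ((A, -M) : ℝ × ℝ) ((A, M) : ℝ × ℝ) = 2 * M := by
  rw [Prod.dist_eq, Real.dist_eq, Real.dist_eq, sub_self, abs_zero,
    show (-M) - M = -(2 * M) by ring, abs_neg, abs_of_nonneg (by linarith)]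
  exact max_eq_right (by linarith)

lemma dhor (A B M : ℝ) (hM : 0 ≤ M) (h : B - A = 2 * M) :
    dist ((A, M) : ℝ × ℝ) ((B, M) : ℝ × ℝ) = 2 * M := by
  rw [Prod.dist_eq, Real.dist_eq, Real.dist_eq, sub_self, abs_zero,
    show A - B = -(2 * M) by linarith, abs_neg, abs_of_nonneg (by linarith)]
  exact max_eq_left (by linarith)

lemma ddiag (A B M : ℝ) (hM : 0 ≤ M) (h : B - A = 2 * M) :
    dist ((A, -M) : ℝ × ℝ) ((B, M) : ℝ × ℝ) = 2 * M := by
  rw [Prod.dist_eq, Real.dist_eq, Real.dist_eq,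
    show A - B = -(2 * M) by linarith, show (-M) - M = -(2 * M) by ring, abs_neg,
    abs_of_nonneg (by linarith)]
  exact max_self _

/-- Step 1: each square is mapped into a single square by a 2δ-isometric map. -/
theorem step1_image_of_box_subset_box {N : ℕ} (hN : 0 < N) {M : ℝ} (hM : 0 < M)
    (x y : Fin N → ℝ) (hx : ∀ n, x n ∈ Set.Icc (0 : ℝ) M) (hy : ∀ n, y n ∈ Set.Icc (0 : ℝ) M)
    {δ : ℝ} (hδ0 : 0 < δ) (hδM : δ < M)
    (F : ↥(Kset M x) → ↥(Kset M y))
    (hF : ∀ p q : ↥(Kset M x), |dist p q - dist (F p) (F q)| ≤ 2 * δ) :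
    ∀ n : Fin N, ∃ m : Fin N,
      ∀ p : ↥(Kset M x), (p : ℝ × ℝ) ∈ box M n → (F p : ℝ × ℝ) ∈ box M m := by
  have hM0 : (0 : ℝ) ≤ M := hM.le
  intro n
  have hsub : ∀ r : ℝ × ℝ, r ∈ box M (n : ℕ) → r ∈ Kset M x :=
    fun r hr => Set.mem_iUnion.mpr ⟨n, Or.inr hr⟩
  have hm1 : ((4 * M + 10 * M * ((n : ℕ) : ℝ), -M) : ℝ × ℝ) ∈ box M (n : ℕ) := by
    rw [box_mem_iff]; dsimp only; refine ⟨⟨le_refl _, by linarith⟩, le_refl _, by linarith⟩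
  have hm2 : ((4 * M + 10 * M * ((n : ℕ) : ℝ), M) : ℝ × ℝ) ∈ box M (n : ℕ) := by
    rw [box_mem_iff]; dsimp only; refine ⟨⟨le_refl _, by linarith⟩, by linarith, le_refl _⟩
  have hm3 : ((4 * M + 10 * M * ((n : ℕ) : ℝ) + 2 * M, M) : ℝ × ℝ) ∈ box M (n : ℕ) := by
    rw [box_mem_iff]; dsimp only; refine ⟨⟨by linarith, le_refl _⟩, by linarith, le_refl _⟩
  set c1 : ↥(Kset M x) := ⟨_, hsub _ hm1⟩ with hc1
  set c2 : ↥(Kset M x) := ⟨_, hsub _ hm2⟩ with hc2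
  set c3 : ↥(Kset M x) := ⟨_, hsub _ hm3⟩ with hc3
  have bnd : ∀ (p q : ↥(Kset M x)), dist (p : ℝ × ℝ) (q : ℝ × ℝ) = 2 * M →
      (2 * M - 2 * δ ≤ dist (F p : ℝ × ℝ) (F q : ℝ × ℝ) ∧
        dist (F p : ℝ × ℝ) (F q : ℝ × ℝ) ≤ 2 * M + 2 * δ) := by
    intro p q h
    have hk := hF p q
    rw [Subtype.dist_eq, Subtype.dist_eq, h] at hk
    have := abs_le.mp hk
    exact ⟨by linarith, by linarith⟩
  have b12 := bnd c1 c2 (dvert _ M hM0)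
  have b13 := bnd c1 c3 (ddiag _ _ M hM0 (by ring))
  have b23 := bnd c2 c3 (dhor _ _ M hM0 (by ring))
  rcases Kset_cases (F c1).2 with ⟨m, hbox | hpt⟩
  · refine ⟨m, fun p hp => ?_⟩
    have hple : dist (p : ℝ × ℝ) (c1 : ℝ × ℝ) ≤ 2 * M := box_diam hp hm1
    have hk := hF p c1
    rw [Subtype.dist_eq, Subtype.dist_eq] at hk
    have habs := abs_le.mp hk
    have hlt : dist (F p : ℝ × ℝ) (F c1 : ℝ × ℝ) < 4 * M := by linarith
    exact close_box hM0 (F p).2 hbox hlt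
  · have ne12 : (F c1 : ℝ × ℝ) ≠ (F c2 : ℝ × ℝ) := dist_pos.mp (by linarith [b12.1])
    have ne13 : (F c1 : ℝ × ℝ) ≠ (F c3 : ℝ × ℝ) := dist_pos.mp (by linarith [b13.1])
    have ne23 : (F c2 : ℝ × ℝ) ≠ (F c3 : ℝ × ℝ) := dist_pos.mp (by linarith [b23.1])
    have h2 : (F c2 : ℝ × ℝ) = pp M y m ∨ (F c2 : ℝ × ℝ) = pm M y m := by
      refine close_pt hM0 (F c2).2 hpt ?_
      rw [dist_comm]; linarith [b12.2]
    have h3 : (F c3 : ℝ × ℝ) = pp M y m ∨ (F c3 : ℝ × ℝ) = pm M y m := by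
      refine close_pt hM0 (F c3).2 hpt ?_
      rw [dist_comm]; linarith [b13.2]
    rcases hpt with h1 | h1 <;> rcases h2 with h2 | h2 <;> rcases h3 with h3 | h3 <;>
      first
        | exact absurd (h1.trans h2.symm) ne12
        | exact absurd (h1.trans h3.symm) ne13
        | exact absurd (h2.trans h3.symm) ne23
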